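/- Gordan's lemma: Given a rational polyhedral cone C ⊆ ℝ^n, there exist finitely many lattice points g^1, …, g^m ∈ C ∩ ℤ^n such that every x ∈ C ∩ ℤ^n can be written as x = Σ_{j=1}^m λ_j g^j with λ_j ∈ ℕ for all j. -/

import Mathlib

def conicalHull {E : Type*} [AddCommMonoid E] [Module ℝ E] (s : Set E) : Set E :=
  {x | ∃ (k : ℕ) (c : Fin k → ℝ) (v : Fin k → E),
    (∀ i, 0 ≤ c i) ∧ (∀ i, v i ∈ s) ∧ x = ∑ i, c i • v i}

private lemma rat_scale (q : ℚ) (d : ℕ) (h : q.den ∣ d) : ∃ z : ℤ, (z : ℚ) = (d : ℚ) * q := by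
  obtain ⟨m, hm⟩ := h
  refine ⟨q.num * m, ?_⟩
  have h1 : (q : ℚ) * q.den = q.num := Rat.mul_den_eq_num q
  push_cast [hm]
  rw [← h1]; ring

private lemma mem_conicalHull_iff {E : Type*} [AddCommMonoid E] [Module ℝ E] [DecidableEq E]
    (R : Finset E) (x : E) :
    x ∈ conicalHull (R : Set E) ↔ ∃ c : E → ℝ, (∀ r, 0 ≤ c r) ∧ x = ∑ r ∈ R, c r • r := by
  constructor
  · rintro ⟨k, c, v, hc, hv, rfl⟩
    refine ⟨fun r => ∑ i ∈ Finset.univ.filter (v · = r), c i,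
      fun r => Finset.sum_nonneg fun i _ => hc i, ?_⟩
    rw [← Finset.sum_fiberwise_of_maps_to (fun i _ => hv i) (fun i => c i • v i)]
    refine Finset.sum_congr rfl fun r _ => ?_
    rw [Finset.sum_smul]
    refine Finset.sum_congr rfl fun i hi => ?_
    rw [(Finset.mem_filter.mp hi).2]
  · rintro ⟨c, hc, rfl⟩
    refine ⟨R.card, fun i => c (R.equivFin.symm i : E), fun i => (R.equivFin.symm i : E),
      fun i => hc _, fun i => (R.equivFin.symm i).2, ?_⟩
    rw [← Finset.sum_coe_sort R (fun r => c r • r),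
      ← Equiv.sum_comp R.equivFin.symm (fun r : R => c (r : E) • (r : E))]

theorem gordan_hilbert_basis (n : ℕ) (C : Set (Fin n → ℝ))
    (R : Finset (Fin n → ℝ)) (hR : ∀ r ∈ R, ∀ j, ∃ q : ℚ, r j = (q : ℝ))
    (hC : C = conicalHull (R : Set (Fin n → ℝ))) :
    ∃ (m : ℕ) (g : Fin m → Fin n → ℤ),
      (∀ j, (fun k => ((g j k : ℝ))) ∈ C) ∧
      ∀ x : Fin n → ℤ, (fun k => ((x k : ℝ))) ∈ C →
        ∃ lam : Fin m → ℕ, ∀ k, x k = ∑ j, (lam j : ℤ) * g j k := by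
  classical
  subst hC
  set p := R.card with hp
  set e : Fin p → Fin n → ℝ := fun i => (R.equivFin.symm i : Fin n → ℝ) with he
  have heR : ∀ i, e i ∈ R := fun i => (R.equivFin.symm i).2
  have hq : ∀ i k, ∃ q : ℚ, e i k = (q : ℝ) := fun i k => hR _ (heR i) k
  choose q hq using hq
  set d : Fin p → ℕ := fun i => ∏ k, (q i k).den with hd
  have hdpos : ∀ i, 0 < d i := fun i => Finset.prod_pos fun k _ => (q i k).pos
  have hdvd : ∀ i k, (q i k).den ∣ d i := fun i k => Finset.dvd_prod_of_mem _ (Finset.mem_univ k)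
  have hρ : ∀ i k, ∃ z : ℤ, (z : ℚ) = (d i : ℚ) * q i k := fun i k => rat_scale _ _ (hdvd i k)
  choose ρ hρ using hρ
  have hρe : ∀ i k, (ρ i k : ℝ) = (d i : ℝ) * e i k := by
    intro i k
    rw [hq i k]
    exact_mod_cast congrArg (fun t : ℚ => (t : ℝ)) (hρ i k)
  -- the box
  set B : Set (Fin n → ℤ) := {z | ∃ t : Fin p → ℝ, (∀ i, 0 ≤ t i ∧ t i ≤ 1) ∧
    ∀ k, (z k : ℝ) = ∑ i, t i * ρ i k} with hB
  have hfin : B.Finite := by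
    set M : Fin n → ℤ := fun k => ∑ i, |ρ i k| with hM
    have hsub : B ⊆ Set.pi Set.univ fun k => Set.Icc (-(M k)) (M k) := by
      rintro z ⟨t, ht, hz⟩ k _
      have habs : |(z k : ℝ)| ≤ (M k : ℝ) := by
        rw [hz k]
        calc |∑ i, t i * ρ i k| ≤ ∑ i, |t i * ρ i k| := Finset.abs_sum_le_sum_abs _ _
          _ ≤ ∑ i, |(ρ i k : ℝ)| := by
              refine Finset.sum_le_sum fun i _ => ?_
              rw [abs_mul]
              have := (ht i)
              nlinarith [abs_nonneg (ρ i k : ℝ), abs_le.mpr ⟨by linarith [this.1], this.2⟩]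
          _ = (M k : ℝ) := by push_cast [hM]; rfl
      have h2 : |z k| ≤ M k := by
        have : |((z k : ℤ) : ℝ)| ≤ ((M k : ℤ) : ℝ) := habs
        rw [← Int.cast_abs] at this
        exact_mod_cast this
      exact Set.mem_Icc.mpr (abs_le.mp h2)
    exact Set.Finite.subset (Set.Finite.pi fun k => Set.finite_Icc _ _) hsub
  set s : Finset (Fin n → ℤ) := hfin.toFinset with hs
  set gZ : Fin s.card → Fin n → ℤ := fun j => (s.equivFin.symm j : Fin n → ℤ) with hgZ
  have hgB : ∀ j, gZ j ∈ B := fun j => hfin.mem_toFinset.mp (s.equivFin.symm j).2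
  have hidx : ∀ w ∈ B, ∃ j, gZ j = w := by
    intro w hw
    exact ⟨s.equivFin ⟨w, hfin.mem_toFinset.mpr hw⟩, by simp [hgZ]⟩
  refine ⟨s.card, gZ, ?_, ?_⟩
  · -- each generator in C
    intro j
    obtain ⟨t, ht, hz⟩ := hgB j
    refine ⟨p, fun i => t i * d i, e, fun i => mul_nonneg (ht i).1 (by positivity),
      heR, ?_⟩
    funext k
    rw [hz k, Finset.sum_apply]
    refine Finset.sum_congr rfl fun i _ => ?_
    rw [Pi.smul_apply, smul_eq_mul, hρe i k]; ring
  · intro x hx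
    rw [mem_conicalHull_iff] at hx
    obtain ⟨c, hc, hxc⟩ := hx
    set a : Fin p → ℝ := fun i => c (e i) with ha
    have hxa : ∀ k, (x k : ℝ) = ∑ i, a i * e i k := by
      intro k
      have h0 := congrFun hxc k
      rw [h0, Finset.sum_apply, ← Finset.sum_coe_sort R (fun r => (c r • r) k),
        ← Equiv.sum_comp R.equivFin.symm (fun r : R => (c (r : Fin n → ℝ) • (r : Fin n → ℝ)) k)]
      simp [ha, he, smul_eq_mul]; rfl
    set b : Fin p → ℝ := fun i => a i / d i with hb
    have hbnn : ∀ i, 0 ≤ b i := fun i => div_nonneg (hc _) (by positivity)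
    have hxb : ∀ k, (x k : ℝ) = ∑ i, b i * ρ i k := by
      intro k
      rw [hxa k]
      refine Finset.sum_congr rfl fun i _ => ?_
      rw [hρe i k, hb]
      field_simp
      rw [mul_div_cancel_right₀ _ (Nat.cast_ne_zero.mpr (hdpos i).ne' : ((d i : ℕ) : ℝ) ≠ 0)]
    set N : Fin p → ℕ := fun i => ⌊b i⌋₊ with hN
    set z : Fin n → ℤ := fun k => x k - ∑ i, (N i : ℤ) * ρ i k with hz
    have hzB : z ∈ B := by
      refine ⟨fun i => b i - N i, fun i => ⟨by
        have := Nat.floor_le (hbnn i); simp only [hN]; linarith, by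
        have := Nat.lt_floor_add_one (b i); simp only [hN]; linarith⟩, fun k => ?_⟩
      simp only [hz]
      push_cast
      rw [hxb k, ← Finset.sum_sub_distrib]
      refine Finset.sum_congr rfl fun i _ => ?_
      ring
    have hρB : ∀ i, ρ i ∈ B := by
      intro i
      refine ⟨fun i' => if i' = i then 1 else 0, fun i' => by dsimp only; split <;> norm_num, fun k => ?_⟩
      simp [Finset.sum_ite_eq']
    obtain ⟨j0, hj0⟩ := hidx z hzB
    choose σ hσ using fun i => hidx (ρ i) (hρB i)
    refine ⟨fun j => (if j = j0 then 1 else 0) + ∑ i ∈ Finset.univ.filter (σ · = j), N i,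
      fun k => ?_⟩
    have h1 : ∑ j, (((if j = j0 then 1 else 0) + ∑ i ∈ Finset.univ.filter (σ · = j), N i : ℕ) : ℤ) * gZ j k
        = (∑ j, (if j = j0 then (1:ℤ) else 0) * gZ j k)
          + ∑ j, (∑ i ∈ Finset.univ.filter (σ · = j), (N i : ℤ)) * gZ j k := by
      rw [← Finset.sum_add_distrib]
      refine Finset.sum_congr rfl fun j _ => ?_
      push_cast
      ring
    rw [h1]
    have h2 : ∑ j, (if j = j0 then (1:ℤ) else 0) * gZ j k = z k := by
      rw [← hj0]; simp [Finset.sum_ite_eq']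
    have h3 : ∑ j, (∑ i ∈ Finset.univ.filter (σ · = j), (N i : ℤ)) * gZ j k
        = ∑ i, (N i : ℤ) * ρ i k := by
      calc ∑ j, (∑ i ∈ Finset.univ.filter (σ · = j), (N i : ℤ)) * gZ j k
          = ∑ j, ∑ i ∈ Finset.univ.filter (σ · = j), (N i : ℤ) * gZ (σ i) k := by
            refine Finset.sum_congr rfl fun j _ => ?_
            rw [Finset.sum_mul]
            refine Finset.sum_congr rfl fun i hi => ?_
            rw [(Finset.mem_filter.mp hi).2]
        _ = ∑ i, (N i : ℤ) * gZ (σ i) k :=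
            Finset.sum_fiberwise_of_maps_to (fun i _ => Finset.mem_univ (σ i)) _
        _ = ∑ i, (N i : ℤ) * ρ i k := by
            refine Finset.sum_congr rfl fun i _ => ?_
            rw [hσ i]
    rw [h2, h3, hz]
    ring
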